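/- Consider the problem min { ξ||π_Ω(S)||_1 + ⟨Q, L - L̃⟩ + (1/(2ρ))||L - L̃||_F² : ||L + S - π_Ω(D)||_F ≤ δ } with δ = 0. Writing q := L̃ - ρQ, the optimal solution is S* = sgn(π_Ω(D - q)) ⊙ max{|π_Ω(D - q)| - ξρE, 0} - π_{Ω^c}(q) and L* = π_Ω(D) - S*, where E is the all-ones matrix and π_{Ω^c} projects onto the complement of Ω. -/

import Mathlib

open Matrix BigOperators Finset

variable {m n : ℕ}

/-- Euclidean norm of a vector. -/
noncomputable def e2 {k : ℕ} (v : Fin k → ℝ) : ℝ := Real.sqrt (∑ i, v i ^ 2)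

/-- Spectral norm (largest singular value) of a matrix, as the operator norm ℓ2 → ℓ2. -/
noncomputable def specNorm (A : Matrix (Fin m) (Fin n) ℝ) : ℝ :=
  sSup {c | ∃ x : Fin n → ℝ, e2 x ≤ 1 ∧ c = e2 (A.mulVec x)}

/-- Frobenius (trace) inner product. -/
noncomputable def frobInner (A B : Matrix (Fin m) (Fin n) ℝ) : ℝ := ∑ i, ∑ j, A i j * B i j

/-- Nuclear norm, via duality with the spectral norm. -/
noncomputable def nucNorm (A : Matrix (Fin m) (Fin n) ℝ) : ℝ :=
  sSup {c | ∃ W : Matrix (Fin m) (Fin n) ℝ, specNorm W ≤ 1 ∧ c = frobInner A W}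

/-- Frobenius norm. -/
noncomputable def frobNorm (A : Matrix (Fin m) (Fin n) ℝ) : ℝ :=
  Real.sqrt (∑ i, ∑ j, A i j ^ 2)

/-- Squared Frobenius norm. -/
noncomputable def frobSq (A : Matrix (Fin m) (Fin n) ℝ) : ℝ := ∑ i, ∑ j, A i j ^ 2

/-- Entrywise ℓ1 norm. -/
noncomputable def l1Norm (A : Matrix (Fin m) (Fin n) ℝ) : ℝ := ∑ i, ∑ j, |A i j|

/-- Projection onto the index set Ω (zeroing out entries off Ω). -/
def piom (Ω : Finset (Fin m × Fin n)) (A : Matrix (Fin m) (Fin n) ℝ) :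
    Matrix (Fin m) (Fin n) ℝ :=
  Matrix.of fun i j => if (i, j) ∈ Ω then A i j else 0

/-- Projection onto the complement of Ω. -/
def piomc (Ω : Finset (Fin m × Fin n)) (A : Matrix (Fin m) (Fin n) ℝ) :
    Matrix (Fin m) (Fin n) ℝ :=
  Matrix.of fun i j => if (i, j) ∈ Ω then 0 else A i j


lemma soft_min (μ t s : ℝ) (hμ : 0 < μ) :
    μ * |Real.sign t * max (|t| - μ) 0| + (Real.sign t * max (|t| - μ) 0 - t) ^ 2 / 2
      ≤ μ * |s| + (s - t) ^ 2 / 2 := by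
  set s0 := Real.sign t * max (|t| - μ) 0 with hs0
  obtain ⟨g, hg1, hg2, hg3⟩ : ∃ g : ℝ, |g| ≤ 1 ∧ μ * g = t - s0 ∧ g * s0 = |s0| := by
    rcases le_or_gt |t| μ with h | h
    · have hm : max (|t| - μ) 0 = 0 := max_eq_right (by linarith)
      refine ⟨t / μ, ?_, ?_, ?_⟩
      · rw [abs_div, abs_of_pos hμ, div_le_one hμ]; exact h
      · rw [hs0, hm]; field_simp; ring
      · simp [hs0, hm]
    · have hm : max (|t| - μ) 0 = |t| - μ := max_eq_left (by linarith)
      rcases lt_trichotomy t 0 with ht | ht | ht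
      · have hst : Real.sign t = -1 := Real.sign_of_neg ht
        have habs : |t| = -t := abs_of_neg ht
        refine ⟨-1, by norm_num, ?_, ?_⟩
        · rw [hs0, hst, hm, habs]; ring
        · rw [hs0, hst, hm, habs, abs_of_nonpos (by nlinarith)]; ring
      · exfalso; rw [ht] at h; simp at h; linarith
      · have hst : Real.sign t = 1 := Real.sign_of_pos ht
        have habs : |t| = t := abs_of_pos ht
        refine ⟨1, by norm_num, ?_, ?_⟩
        · rw [hs0, hst, hm, habs]; ring
        · rw [hs0, hst, hm, habs, abs_of_nonneg (by nlinarith)]; ring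
  have h2 : μ * (g * s) ≤ μ * |s| := by
    have hgs : g * s ≤ |s| := by
      calc g * s ≤ |g * s| := le_abs_self _
        _ = |g| * |s| := abs_mul _ _
        _ ≤ 1 * |s| := mul_le_mul_of_nonneg_right hg1 (abs_nonneg s)
        _ = |s| := one_mul _
    exact mul_le_mul_of_nonneg_left hgs hμ.le
  have e1 : μ * |s0| = (t - s0) * s0 := by rw [← hg3, ← mul_assoc, hg2]
  have e2 : μ * (g * s) = (t - s0) * s := by rw [← mul_assoc, hg2]
  nlinarith [sq_nonneg (s - s0)]

lemma entry_min (ρ ξ Qv c t s : ℝ) (hρ : 0 < ρ) (hξ : 0 < ξ)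
    (ht : t = c + ρ * Qv) :
    ξ * |Real.sign t * max (|t| - ξ * ρ) 0|
        + Qv * (c - Real.sign t * max (|t| - ξ * ρ) 0)
        + 1 / (2 * ρ) * (c - Real.sign t * max (|t| - ξ * ρ) 0) ^ 2
      ≤ ξ * |s| + Qv * (c - s) + 1 / (2 * ρ) * (c - s) ^ 2 := by
  set s0 := Real.sign t * max (|t| - ξ * ρ) 0 with hs0
  have hsoft := soft_min (ξ * ρ) t s (mul_pos hξ hρ)
  rw [← hs0] at hsoft
  rw [← sub_nonneg]
  have key : ξ * |s| + Qv * (c - s) + 1 / (2 * ρ) * (c - s) ^ 2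
      - (ξ * |s0| + Qv * (c - s0) + 1 / (2 * ρ) * (c - s0) ^ 2)
      = (1 / ρ) * ((ξ * ρ * |s| + (s - t) ^ 2 / 2)
          - (ξ * ρ * |s0| + (s0 - t) ^ 2 / 2)) := by
    subst ht
    field_simp
    ring
  rw [key]
  exact mul_nonneg (by positivity) (by linarith)

lemma entry_min2 (ρ Qv c t s : ℝ) (hρ : 0 < ρ) (ht : t = c + ρ * Qv) :
    Qv * (c - t) + 1 / (2 * ρ) * (c - t) ^ 2
      ≤ Qv * (c - s) + 1 / (2 * ρ) * (c - s) ^ 2 := by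
  rw [← sub_nonneg]
  have key : Qv * (c - s) + 1 / (2 * ρ) * (c - s) ^ 2
      - (Qv * (c - t) + 1 / (2 * ρ) * (c - t) ^ 2) = (s - t) ^ 2 / (2 * ρ) := by
    subst ht; field_simp; ring
  rw [key]
  positivity

/-- for the problem
`min { ξ‖π_Ω(S)‖₁ + ⟨Q, L - L̃⟩ + (1/(2ρ))‖L - L̃‖_F² : ‖L + S - π_Ω(D)‖_F ≤ δ }` with
`δ = 0` and `q = L̃ - ρQ`, the optimal solution is
`S* = sgn(π_Ω(D - q)) ⊙ max{|π_Ω(D - q)| - ξρE, 0} - π_{Ωᶜ}(q)` and `L* = π_Ω(D) - S*`. -/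
theorem stmt12 (D Lt Q : Matrix (Fin m) (Fin n) ℝ) (Ω : Finset (Fin m × Fin n))
    (ρ ξ : ℝ) (hρ : 0 < ρ) (hξ : 0 < ξ)
    (q : Matrix (Fin m) (Fin n) ℝ) (hq : q = Lt - ρ • Q)
    (Sstar : Matrix (Fin m) (Fin n) ℝ)
    (hS : Sstar = (Matrix.of fun i j =>
        Real.sign (piom Ω (D - q) i j) * max (|piom Ω (D - q) i j| - ξ * ρ) 0) - piomc Ω q)
    (Lstar : Matrix (Fin m) (Fin n) ℝ) (hL : Lstar = piom Ω D - Sstar) :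
    frobNorm (Lstar + Sstar - piom Ω D) ≤ 0 ∧
      ∀ L S : Matrix (Fin m) (Fin n) ℝ, frobNorm (L + S - piom Ω D) ≤ 0 →
        ξ * l1Norm (piom Ω Sstar) + frobInner Q (Lstar - Lt) + 1 / (2 * ρ) * frobSq (Lstar - Lt)
          ≤ ξ * l1Norm (piom Ω S) + frobInner Q (L - Lt) + 1 / (2 * ρ) * frobSq (L - Lt) := by
  constructor
  · have hz : Lstar + Sstar - piom Ω D = 0 := by rw [hL]; abel
    rw [hz]
    simp [frobNorm]
  · intro L S hLS
    unfold frobNorm at hLS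
    have hsum : ∑ i, ∑ j, (L + S - piom Ω D) i j ^ 2 ≤ 0 :=
      Real.sqrt_eq_zero'.mp (le_antisymm hLS (Real.sqrt_nonneg _))
    have hz : ∀ i j, (L + S - piom Ω D) i j = 0 := by
      intro i j
      by_contra hne
      have h1 : 0 < (L + S - piom Ω D) i j ^ 2 := by positivity
      have h2 : (L + S - piom Ω D) i j ^ 2 ≤ ∑ j', (L + S - piom Ω D) i j' ^ 2 :=
        Finset.single_le_sum (f := fun j' => (L + S - piom Ω D) i j' ^ 2)
          (fun _ _ => sq_nonneg _) (Finset.mem_univ j)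
      have h3 : ∑ j', (L + S - piom Ω D) i j' ^ 2
          ≤ ∑ i', ∑ j', (L + S - piom Ω D) i' j' ^ 2 :=
        Finset.single_le_sum (f := fun i' => ∑ j', (L + S - piom Ω D) i' j' ^ 2)
          (fun _ _ => Finset.sum_nonneg fun _ _ => sq_nonneg _) (Finset.mem_univ i)
      linarith
    have hL0 : ∀ i j, L i j = piom Ω D i j - S i j := by
      intro i j
      have := hz i j
      simp only [Matrix.add_apply, Matrix.sub_apply] at this
      linarith
    have hqe : ∀ i j, q i j = Lt i j - ρ * Q i j := by
      intro i j
      rw [hq]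
      simp [Matrix.sub_apply, Matrix.smul_apply, smul_eq_mul]
    have hSe : ∀ i j, Sstar i j = Real.sign (piom Ω (D - q) i j)
        * max (|piom Ω (D - q) i j| - ξ * ρ) 0 - piomc Ω q i j := by
      intro i j; rw [hS]; rfl
    have hLe : ∀ i j, Lstar i j = piom Ω D i j - Sstar i j := by
      intro i j; rw [hL]; rfl
    have combine : ∀ (L' S' : Matrix (Fin m) (Fin n) ℝ),
        ξ * l1Norm (piom Ω S') + frobInner Q (L' - Lt) + 1 / (2 * ρ) * frobSq (L' - Lt)
        = ∑ i, ∑ j, (ξ * |piom Ω S' i j| + Q i j * (L' i j - Lt i j)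
            + 1 / (2 * ρ) * (L' i j - Lt i j) ^ 2) := by
      intro L' S'
      simp [l1Norm, frobInner, frobSq, Matrix.sub_apply, Finset.mul_sum,
        Finset.sum_add_distrib]
    rw [combine Lstar Sstar, combine L S]
    apply Finset.sum_le_sum
    intro i _
    apply Finset.sum_le_sum
    intro j _
    rw [hLe i j, hL0 i j]
    by_cases hmem : (i, j) ∈ Ω
    · simp only [piom, piomc, Matrix.of_apply, Matrix.sub_apply, if_pos hmem]
      rw [hSe i j]
      simp only [piom, piomc, Matrix.of_apply, Matrix.sub_apply, if_pos hmem, sub_zero]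
      have h := entry_min ρ ξ (Q i j) (D i j - Lt i j) (D i j - q i j) (S i j) hρ hξ
        (by rw [hqe i j]; ring)
      nlinarith [h]
    · simp only [piom, piomc, Matrix.of_apply, Matrix.sub_apply, if_neg hmem,
        abs_zero, mul_zero, zero_sub, zero_add, zero_mul]
      rw [hSe i j]
      simp only [piom, piomc, Matrix.of_apply, Matrix.sub_apply, if_neg hmem,
        Real.sign_zero, zero_mul, abs_zero, zero_sub, sub_zero, zero_add]
      have h := entry_min2 ρ (Q i j) (-Lt i j) (-q i j) (S i j) hρ (by rw [hqe i j]; ring)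
      nlinarith [h]
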